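/- Let A be a Hurwitz matrix with −r (r > 0) the largest real part of its eigenvalues, and let {γ_n} be a positive sequence with γ_n → 0. Then for any 0 < r' < r there exists a constant C > 0 such that for all k < n, ‖∏_{j=k}^{n} (I + γ_j A)‖ ≤ C e^{−r' ∑_{j=k}^{n} γ_j}. -/

import Mathlib

open Finset Module
set_option maxHeartbeats 8000000

lemma two_term_binom (x y : ℝ) (hx : 0 ≤ x) (hy : 0 ≤ y) : ∀ s : ℕ,
    x^(s+1) + (s+1) * x^s * y ≤ (x+y)^(s+1) := by
  intro s
  induction s with
  | zero => simp
  | succ t ih =>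
    have h1 : (x+y)^(t+1+1) = (x+y) * (x+y)^(t+1) := by ring
    have h2 : (x+y) * (x^(t+1) + (t+1) * x^t * y) ≤ (x+y) * (x+y)^(t+1) :=
      mul_le_mul_of_nonneg_left ih (by linarith)
    have h3 : 0 ≤ x^t := pow_nonneg hx t
    have e1 : x ^ (t+1) = x ^ t * x := pow_succ x t
    have e2 : x ^ (t+1+1) = x ^ t * x * x := by rw [pow_succ, e1]
    have ht : (0:ℝ) ≤ (t:ℝ) := Nat.cast_nonneg t
    have key : x^(t+1+1) + ((t:ℝ)+1+1)*x^(t+1)*y ≤ (x+y)*(x^(t+1) + ((t:ℝ)+1)*x^t*y) := by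
      rw [e1, e2]; nlinarith [mul_nonneg (mul_nonneg h3 hy) hy, mul_nonneg hx hy]
    rw [h1]; push_cast
    linarith

lemma pow_mul_exp_neg_le (ε : ℝ) (hε : 0 < ε) (x : ℝ) (hx : 0 ≤ x) (s : ℕ) :
    x ^ s * Real.exp (-ε * x) ≤ s.factorial / ε ^ s := by
  have hfac : (0:ℝ) < s.factorial := by positivity
  have h1 : (ε*x) ^ s / s.factorial ≤ Real.exp (ε*x) := by
    calc (ε*x) ^ s / s.factorial ≤ ∑ i ∈ range (s+1), (ε*x)^i / i.factorial := by
          refine Finset.single_le_sum (f := fun i => (ε*x)^i / i.factorial) ?_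
            (Finset.self_mem_range_succ s)
          intro i _; positivity
      _ ≤ Real.exp (ε*x) := Real.sum_le_exp_of_nonneg (by positivity) _
  have h2 : ε^s * x^s ≤ Real.exp (ε*x) * s.factorial := by
    rw [div_le_iff₀ hfac, mul_pow] at h1; exact h1
  have h3 : Real.exp (-ε*x) = (Real.exp (ε*x))⁻¹ := by
    rw [← Real.exp_neg]; ring_nf
  rw [h3, ← div_eq_mul_inv, div_le_div_iff₀ (Real.exp_pos _) (pow_pos hε s)]
  nlinarith

lemma prod_rep {R : Type*} [NormedRing R] [NormedAlgebra ℂ R]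
    (g : R) (γ : ℕ → ℝ) (a : ℕ → ℂ) (ρ Γ : ℝ) (hρ : 0 ≤ ρ) (k : ℕ)
    (hγ : ∀ j, 0 ≤ γ j) (hγΓ : ∀ j, k ≤ j → γ j ≤ Γ)
    (ha : ∀ j, k ≤ j → ‖a j‖ ≤ Real.exp (-ρ * γ j)) (m : ℕ) :
    ∃ c : ℕ → ℂ,
      ((List.range m).map (fun i => algebraMap ℂ R (a (k+i)) + (γ (k+i) : ℂ) • g)).prod
        = ∑ s ∈ Finset.range (m+1), c s • g ^ s
      ∧ (∀ s, m + 1 ≤ s → c s = 0)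
      ∧ ∀ s, ‖c s‖ * s.factorial ≤ (∑ i ∈ Finset.range m, γ (k+i)) ^ s
          * Real.exp (ρ*Γ*s) * Real.exp (-ρ * ∑ i ∈ Finset.range m, γ (k+i)) := by
  induction m with
  | zero =>
      refine ⟨fun s => if s = 0 then 1 else 0, by simp, ?_, ?_⟩
      · intro s hs
        have : s ≠ 0 := by omega
        simp [this]
      · intro s
        rcases Nat.eq_zero_or_pos s with h | h
        · subst h; simp
        · have hs0 : s ≠ 0 := by omega
          simp [hs0, zero_pow hs0]
  | succ m ih =>
      obtain ⟨c, hrep, hz, hb⟩ := ih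
      set α := a (k+m) with hα
      set γm := γ (k+m) with hγm
      set S := ∑ i ∈ Finset.range m, γ (k+i) with hS
      have hS0 : 0 ≤ S := Finset.sum_nonneg fun i _ => hγ _
      have hγm0 : 0 ≤ γm := hγ _
      refine ⟨fun s => α * c s + (if s = 0 then 0 else (γm : ℂ) * c (s-1)), ?_, ?_, ?_⟩
      · -- representation
        rw [List.range_succ, List.map_append, List.prod_append, List.map_singleton,
          List.prod_singleton, hrep]
        rw [Finset.sum_mul]
        have hterm : ∀ s, (c s • g ^ s) * (algebraMap ℂ R α + (γm:ℂ) • g)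
            = (α * c s) • g ^ s + ((γm:ℂ) * c s) • g ^ (s+1) := by
          intro s
          rw [mul_add]
          congr 1
          · calc (c s • g ^ s) * algebraMap ℂ R α
                = c s • (g ^ s * algebraMap ℂ R α) := smul_mul_assoc _ _ _
              _ = c s • (algebraMap ℂ R α * g ^ s) := by rw [← Algebra.commutes]
              _ = c s • (α • g ^ s) := by rw [← Algebra.smul_def]
              _ = (α * c s) • g ^ s := by rw [smul_smul, mul_comm]
          · calc (c s • g ^ s) * ((γm:ℂ) • g)
                = c s • (g ^ s * ((γm:ℂ) • g)) := smul_mul_assoc _ _ _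
              _ = c s • ((γm:ℂ) • (g ^ s * g)) := by rw [mul_smul_comm]
              _ = ((γm:ℂ) * c s) • g ^ (s+1) := by
                  rw [smul_smul, mul_comm (c s) ((γm:ℂ)), ← pow_succ]
        simp_rw [← hα, ← hγm, hterm]
        rw [Finset.sum_add_distrib]
        have h1 : ∑ s ∈ Finset.range (m+2), (α * c s) • g ^ s
            = ∑ s ∈ Finset.range (m+1), (α * c s) • g ^ s := by
          rw [Finset.sum_range_succ, hz (m+1) le_rfl]
          simp
        have h2 : ∑ s ∈ Finset.range (m+2),
              (if s = 0 then 0 else (γm:ℂ) * c (s-1)) • g ^ s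
            = ∑ s ∈ Finset.range (m+1), ((γm:ℂ) * c s) • g ^ (s+1) := by
          rw [Finset.sum_range_succ' (fun s => (if s = 0 then 0 else (γm:ℂ) * c (s-1)) • g ^ s)]
          simp
        have hrhs : ∑ s ∈ Finset.range (m+1+1),
              (α * c s + (if s = 0 then 0 else (γm:ℂ) * c (s-1))) • g ^ s
            = ∑ s ∈ Finset.range (m+1), (α * c s) • g ^ s
              + ∑ s ∈ Finset.range (m+1), ((γm:ℂ) * c s) • g ^ (s+1) := by
          simp_rw [add_smul]
          rw [Finset.sum_add_distrib, h1, h2]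
        rw [hrhs]
      · -- vanishing
        intro s hs
        have h1 : c s = 0 := hz s (by omega)
        have h2 : c (s-1) = 0 := hz (s-1) (by omega)
        have hs0 : s ≠ 0 := by omega
        simp [h1, h2, hs0]
      · -- bounds
        intro s
        have hSnew : ∑ i ∈ Finset.range (m+1), γ (k+i) = S + γm := by
          rw [Finset.sum_range_succ]
        rw [hSnew]
        have hexp : Real.exp (-ρ * (S + γm)) = Real.exp (-ρ*S) * Real.exp (-ρ*γm) := by
          rw [← Real.exp_add]; ring_nf
        have haγ : ‖α‖ ≤ Real.exp (-ρ * γm) := ha (k+m) (Nat.le_add_right k m)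
        have hE : (0:ℝ) < Real.exp (-ρ*S) := Real.exp_pos _
        have he : (0:ℝ) < Real.exp (-ρ*γm) := Real.exp_pos _
        have hα0 : 0 ≤ ‖α‖ := norm_nonneg _
        rcases s with _ | t
        · have hb0 := hb 0
          simp only [pow_zero, Nat.factorial_zero, Nat.cast_one, mul_one, Nat.cast_zero,
            mul_zero, Real.exp_zero, one_mul] at hb0 ⊢
          rw [hexp]
          calc ‖α * c 0 + 0‖ = ‖α‖ * ‖c 0‖ := by rw [add_zero, norm_mul]
            _ ≤ Real.exp (-ρ*γm) * Real.exp (-ρ*S) := by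
                apply mul_le_mul haγ hb0 (norm_nonneg _) he.le
            _ = Real.exp (-ρ*S) * Real.exp (-ρ*γm) := mul_comm _ _
        · -- s = t+1
          have hbs := hb (t+1)
          have hbt := hb t
          have hfac : ((t+1).factorial : ℝ) = (t+1) * t.factorial := by
            rw [Nat.factorial_succ]; push_cast; ring
          have hnorm : ‖α * c (t+1) + (γm:ℂ) * c t‖
              ≤ ‖α‖ * ‖c (t+1)‖ + γm * ‖c t‖ := by
            refine le_trans (norm_add_le _ _) ?_
            rw [norm_mul, norm_mul, Complex.norm_real, Real.norm_eq_abs, abs_of_nonneg hγm0]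
          have hfacpos : (0:ℝ) ≤ (t.factorial : ℝ) := by positivity
          have step1 : ‖α * c (t+1) + (γm:ℂ) * c t‖ * ((t+1).factorial : ℝ)
              ≤ ‖α‖ * (‖c (t+1)‖ * ((t+1).factorial : ℝ))
                + ((t:ℝ)+1) * γm * (‖c t‖ * (t.factorial : ℝ)) := by
            rw [hfac]
            have := mul_le_mul_of_nonneg_right hnorm
              (by positivity : (0:ℝ) ≤ ((t:ℝ)+1) * t.factorial)
            calc ‖α * c (t+1) + (γm:ℂ) * c t‖ * (((t:ℝ)+1) * t.factorial)
                ≤ (‖α‖ * ‖c (t+1)‖ + γm * ‖c t‖) * (((t:ℝ)+1) * t.factorial) := this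
              _ = ‖α‖ * (‖c (t+1)‖ * (((t:ℝ)+1) * t.factorial))
                  + ((t:ℝ)+1) * γm * (‖c t‖ * (t.factorial : ℝ)) := by ring
          have hB : Real.exp (ρ*Γ*((t:ℝ)+1)) = Real.exp (ρ*Γ*(t:ℝ)) * Real.exp (ρ*Γ) := by
            rw [← Real.exp_add]; ring_nf
          have key2 : (1:ℝ) ≤ Real.exp (ρ*Γ) * Real.exp (-ρ*γm) := by
            rw [← Real.exp_add]
            apply Real.one_le_exp
            nlinarith [mul_le_mul_of_nonneg_left (hγΓ (k+m) (Nat.le_add_right k m)) hρ]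
          have hbinom := two_term_binom S γm hS0 hγm0 t
          have term1 : ‖α‖ * (‖c (t+1)‖ * ((t+1).factorial : ℝ))
              ≤ S^(t+1) * Real.exp (ρ*Γ*((t:ℝ)+1)) * (Real.exp (-ρ*S) * Real.exp (-ρ*γm)) := by
            calc ‖α‖ * (‖c (t+1)‖ * ((t+1).factorial : ℝ))
                ≤ Real.exp (-ρ*γm) * (S^(t+1) * Real.exp (ρ*Γ*((t:ℝ)+1)) * Real.exp (-ρ*S)) := by
                  apply mul_le_mul haγ ?_ (by positivity) he.le
                  convert hbs using 3
                  rfl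
                  push_cast; ring
              _ = S^(t+1) * Real.exp (ρ*Γ*((t:ℝ)+1)) * (Real.exp (-ρ*S) * Real.exp (-ρ*γm)) := by
                  ring
          have term2 : ((t:ℝ)+1) * γm * (‖c t‖ * (t.factorial : ℝ))
              ≤ ((t:ℝ)+1) * γm * S^t * Real.exp (ρ*Γ*((t:ℝ)+1)) * (Real.exp (-ρ*S) * Real.exp (-ρ*γm)) := by
            have h1 : ‖c t‖ * (t.factorial : ℝ) ≤ S^t * Real.exp (ρ*Γ*(t:ℝ)) * Real.exp (-ρ*S) := hbt
            have h2 : S^t * Real.exp (ρ*Γ*(t:ℝ)) * Real.exp (-ρ*S)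
                ≤ S^t * Real.exp (ρ*Γ*((t:ℝ)+1)) * (Real.exp (-ρ*S) * Real.exp (-ρ*γm)) := by
              rw [hB]
              have expand : S^t * (Real.exp (ρ*Γ*(t:ℝ)) * Real.exp (ρ*Γ)) * (Real.exp (-ρ*S) * Real.exp (-ρ*γm))
                  = (S^t * Real.exp (ρ*Γ*(t:ℝ)) * Real.exp (-ρ*S)) * (Real.exp (ρ*Γ) * Real.exp (-ρ*γm)) := by ring
              rw [expand]
              exact le_mul_of_one_le_right (by positivity) key2
            calc ((t:ℝ)+1) * γm * (‖c t‖ * (t.factorial : ℝ))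
                ≤ ((t:ℝ)+1) * γm * (S^t * Real.exp (ρ*Γ*((t:ℝ)+1)) * (Real.exp (-ρ*S) * Real.exp (-ρ*γm))) := by
                  apply mul_le_mul_of_nonneg_left (le_trans h1 h2) (by positivity)
              _ = ((t:ℝ)+1) * γm * S^t * Real.exp (ρ*Γ*((t:ℝ)+1)) * (Real.exp (-ρ*S) * Real.exp (-ρ*γm)) := by
                  ring
          have hfin : S^(t+1) + ((t:ℝ)+1) * γm * S^t ≤ (S+γm)^(t+1) := by
            have := hbinom
            nlinarith [this]
          rw [hexp]
          have goal_eq : (S+γm)^(t+1) * Real.exp (ρ*Γ*((t:ℕ)+1:ℕ)) * (Real.exp (-ρ*S) * Real.exp (-ρ*γm))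
              = (S+γm)^(t+1) * Real.exp (ρ*Γ*((t:ℝ)+1)) * (Real.exp (-ρ*S) * Real.exp (-ρ*γm)) := by
            norm_num
          have ifne : (t+1 : ℕ) ≠ 0 := by omega
          calc ‖α * c (t+1) + (if (t+1:ℕ) = 0 then 0 else (γm:ℂ) * c (t+1-1))‖ * (((t+1).factorial : ℕ) : ℝ)
              = ‖α * c (t+1) + (γm:ℂ) * c t‖ * (((t+1).factorial : ℕ) : ℝ) := by
                rw [if_neg ifne]; norm_num
            _ ≤ ‖α‖ * (‖c (t+1)‖ * ((t+1).factorial : ℝ))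
                + ((t:ℝ)+1) * γm * (‖c t‖ * (t.factorial : ℝ)) := step1
            _ ≤ S^(t+1) * Real.exp (ρ*Γ*((t:ℝ)+1)) * (Real.exp (-ρ*S) * Real.exp (-ρ*γm))
                + ((t:ℝ)+1) * γm * S^t * Real.exp (ρ*Γ*((t:ℝ)+1)) * (Real.exp (-ρ*S) * Real.exp (-ρ*γm)) := by
                exact add_le_add term1 term2
            _ = (S^(t+1) + ((t:ℝ)+1) * γm * S^t) * (Real.exp (ρ*Γ*((t:ℝ)+1)) * (Real.exp (-ρ*S) * Real.exp (-ρ*γm))) := by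
                ring
            _ ≤ (S+γm)^(t+1) * (Real.exp (ρ*Γ*((t:ℝ)+1)) * (Real.exp (-ρ*S) * Real.exp (-ρ*γm))) := by
                apply mul_le_mul_of_nonneg_right hfin (by positivity)
            _ = (S+γm)^(t+1) * Real.exp (ρ*Γ*(((t+1):ℕ):ℝ)) * (Real.exp (-ρ*S) * Real.exp (-ρ*γm)) := by
                push_cast; ring

section
variable {E : Type*} [NormedAddCommGroup E] [NormedSpace ℂ E]

lemma pow_apply_norm_le (g : E →L[ℂ] E) (K : ℝ) (hK : ‖g‖ ≤ K) (x : E) :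
    ∀ s : ℕ, ‖(g ^ s) x‖ ≤ K ^ s * ‖x‖ := by
  intro s
  induction s with
  | zero => simp
  | succ t ih =>
    have hK0 : 0 ≤ K := le_trans (norm_nonneg g) hK
    calc ‖(g ^ (t+1)) x‖ = ‖g ((g ^ t) x)‖ := by
          rw [pow_succ']; rfl
      _ ≤ ‖g‖ * ‖(g ^ t) x‖ := g.le_opNorm _
      _ ≤ K * (K ^ t * ‖x‖) := by
          apply mul_le_mul hK ih (norm_nonneg _) hK0
      _ = K ^ (t+1) * ‖x‖ := by ring

theorem apply_bound (g : E →L[ℂ] E) (γ : ℕ → ℝ) (a : ℕ → ℂ) (r' ε Γ K : ℝ)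
    (hε : 0 < ε) (hr' : 0 ≤ r') (hK : ‖g‖ ≤ K)
    (hγ : ∀ j, 0 ≤ γ j) (k : ℕ) (hγΓ : ∀ j, k ≤ j → γ j ≤ Γ)
    (ha : ∀ j, k ≤ j → ‖a j‖ ≤ Real.exp (-(r'+ε) * γ j))
    (m D : ℕ) (x : E) (hx : (g ^ D) x = 0) :
    ‖(((List.range m).map
        (fun i => algebraMap ℂ (E →L[ℂ] E) (a (k+i)) + (γ (k+i) : ℂ) • g)).prod) x‖
      ≤ (∑ s ∈ Finset.range D, ((s.factorial : ℝ) / ε^s) * Real.exp ((r'+ε)*Γ*s) * K^s)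
        * Real.exp (-r' * ∑ i ∈ Finset.range m, γ (k+i)) * ‖x‖ := by
  have hρ : (0:ℝ) ≤ r' + ε := by linarith
  obtain ⟨c, hrep, hz, hb⟩ := prod_rep g γ a (r'+ε) Γ hρ k hγ hγΓ ha m
  set S := ∑ i ∈ Finset.range m, γ (k+i) with hS
  have hS0 : 0 ≤ S := Finset.sum_nonneg fun i _ => hγ _
  have hK0 : 0 ≤ K := le_trans (norm_nonneg g) hK
  -- extend representation
  have hrep2 : ((List.range m).map
      (fun i => algebraMap ℂ (E →L[ℂ] E) (a (k+i)) + (γ (k+i) : ℂ) • g)).prod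
      = ∑ s ∈ Finset.range (m+1+D), c s • g ^ s := by
    rw [hrep]
    apply Finset.sum_subset (Finset.range_subset_range.mpr (by omega))
    intro s _ hs
    rw [hz s (by simp at hs; omega)]
    simp
  have happ : (((List.range m).map
      (fun i => algebraMap ℂ (E →L[ℂ] E) (a (k+i)) + (γ (k+i) : ℂ) • g)).prod) x
      = ∑ s ∈ Finset.range D, c s • (g ^ s) x := by
    rw [hrep2]
    rw [ContinuousLinearMap.sum_apply]
    simp_rw [ContinuousLinearMap.smul_apply]
    symm
    apply Finset.sum_subset (Finset.range_subset_range.mpr (by omega))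
    intro s _ hs
    have hsD : D ≤ s := by simp at hs; omega
    have : (g ^ s) x = 0 := by
      have : g ^ s = g ^ (s - D) * g ^ D := by
        rw [← pow_add]
        congr 1
        omega
      rw [this, ContinuousLinearMap.mul_apply, hx, map_zero]
    rw [this, smul_zero]
  rw [happ]
  calc ‖∑ s ∈ Finset.range D, c s • (g ^ s) x‖
      ≤ ∑ s ∈ Finset.range D, ‖c s • (g ^ s) x‖ := norm_sum_le _ _
    _ ≤ ∑ s ∈ Finset.range D, ((s.factorial : ℝ) / ε^s) * Real.exp ((r'+ε)*Γ*s) * K^s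
          * (Real.exp (-r' * S) * ‖x‖) := by
        apply Finset.sum_le_sum
        intro s _
        rw [norm_smul]
        have h1 : ‖c s‖ ≤ S^s * Real.exp ((r'+ε)*Γ*s) * Real.exp (-(r'+ε) * S) := by
          have hfac1 : (1:ℝ) ≤ s.factorial := by exact_mod_cast Nat.one_le_iff_ne_zero.mpr (Nat.factorial_ne_zero s)
          calc ‖c s‖ = ‖c s‖ * 1 := (mul_one _).symm
            _ ≤ ‖c s‖ * s.factorial := by
                apply mul_le_mul_of_nonneg_left hfac1 (norm_nonneg _)
            _ ≤ _ := hb s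
        have h2 : ‖(g ^ s) x‖ ≤ K^s * ‖x‖ := pow_apply_norm_le g K hK x s
        have h3 : S^s * Real.exp (-(r'+ε) * S) ≤ ((s.factorial : ℝ) / ε^s) * Real.exp (-r' * S) := by
          have hsplit : Real.exp (-(r'+ε) * S) = Real.exp (-ε * S) * Real.exp (-r' * S) := by
            rw [← Real.exp_add]; ring_nf
          have := pow_mul_exp_neg_le ε hε S hS0 s
          calc S^s * Real.exp (-(r'+ε) * S)
              = (S^s * Real.exp (-ε * S)) * Real.exp (-r' * S) := by rw [hsplit]; ring
            _ ≤ ((s.factorial : ℝ) / ε^s) * Real.exp (-r' * S) := by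
                apply mul_le_mul_of_nonneg_right this (Real.exp_pos _).le
        calc ‖c s‖ * ‖(g ^ s) x‖
            ≤ (S^s * Real.exp ((r'+ε)*Γ*s) * Real.exp (-(r'+ε) * S)) * (K^s * ‖x‖) := by
              apply mul_le_mul h1 h2 (norm_nonneg _) (by positivity)
          _ = (S^s * Real.exp (-(r'+ε) * S)) * Real.exp ((r'+ε)*Γ*s) * K^s * ‖x‖ := by ring
          _ ≤ (((s.factorial : ℝ) / ε^s) * Real.exp (-r' * S)) * Real.exp ((r'+ε)*Γ*s) * K^s * ‖x‖ := by
              have hnn : (0:ℝ) ≤ Real.exp ((r'+ε)*Γ*s) * K^s * ‖x‖ := by positivity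
              calc (S^s * Real.exp (-(r'+ε) * S)) * Real.exp ((r'+ε)*Γ*s) * K^s * ‖x‖
                  = (S^s * Real.exp (-(r'+ε) * S)) * (Real.exp ((r'+ε)*Γ*s) * K^s * ‖x‖) := by ring
                _ ≤ (((s.factorial : ℝ) / ε^s) * Real.exp (-r' * S)) * (Real.exp ((r'+ε)*Γ*s) * K^s * ‖x‖) := by
                    apply mul_le_mul_of_nonneg_right h3 hnn
                _ = (((s.factorial : ℝ) / ε^s) * Real.exp (-r' * S)) * Real.exp ((r'+ε)*Γ*s) * K^s * ‖x‖ := by ring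
          _ = ((s.factorial : ℝ) / ε^s) * Real.exp ((r'+ε)*Γ*s) * K^s * (Real.exp (-r' * S) * ‖x‖) := by ring
    _ = (∑ s ∈ Finset.range D, ((s.factorial : ℝ) / ε^s) * Real.exp ((r'+ε)*Γ*s) * K^s)
          * Real.exp (-r' * S) * ‖x‖ := by
        rw [← Finset.sum_mul]
        ring
end


lemma sum_Icc_eq_range (γ : ℕ → ℝ) (k n : ℕ) (h : k ≤ n) :
    ∑ j ∈ Finset.Icc k n, γ j = ∑ i ∈ Finset.range (n-k+1), γ (k+i) := by
  have he : Finset.Icc k n = (Finset.range (n-k+1)).map ⟨(k + ·), fun x y h => by simpa using h⟩ := by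
    ext x
    simp only [Finset.mem_map, Finset.mem_range, Function.Embedding.coeFn_mk, Finset.mem_Icc]
    constructor
    · rintro ⟨hx1, hx2⟩; exact ⟨x - k, by omega, show k + (x - k) = x by omega⟩
    · rintro ⟨a, ha, rfl⟩; show k ≤ k + a ∧ k + a ≤ n; omega
  rw [he, Finset.sum_map]
  rfl

section real_complex
variable {d : ℕ}

lemma real_clm_norm_le (M : Matrix (Fin d) (Fin d) ℝ) :
    ‖Matrix.toEuclideanCLM (𝕜 := ℝ) M‖
      ≤ ‖Matrix.toEuclideanCLM (𝕜 := ℂ) (M.map (algebraMap ℝ ℂ))‖ := by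
  apply ContinuousLinearMap.opNorm_le_bound _ (norm_nonneg _)
  intro x
  set x' : Fin d → ℝ := WithLp.equiv 2 _ x with hx'
  have hxx : x = (WithLp.equiv 2 _).symm x' := rfl
  set y : EuclideanSpace ℂ (Fin d) := (WithLp.equiv 2 _).symm (fun i => (x' i : ℂ)) with hy
  have hnorm_xy : ‖y‖ = ‖x‖ := by
    rw [EuclideanSpace.norm_eq, EuclideanSpace.norm_eq]
    congr 1
    apply Finset.sum_congr rfl
    intro i _
    have h1 : y i = ((x' i : ℝ) : ℂ) := rfl
    have h2 : x i = x' i := rfl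
    rw [h1, h2, Complex.norm_real]
  have happly : ‖(Matrix.toEuclideanCLM (𝕜 := ℝ) M) x‖
      = ‖(Matrix.toEuclideanCLM (𝕜 := ℂ) (M.map (algebraMap ℝ ℂ))) y‖ := by
    change ‖(WithLp.equiv 2 _).symm (Matrix.toLin' M x')‖ = ‖(WithLp.equiv 2 _).symm (Matrix.toLin' (M.map (algebraMap ℝ ℂ)) (fun i => (x' i : ℂ)))‖
    rw [EuclideanSpace.norm_eq, EuclideanSpace.norm_eq]
    congr 1
    apply Finset.sum_congr rfl
    intro i _
    have h1 : ((WithLp.equiv 2 (Fin d → ℝ)).symm ((Matrix.toLin' M) x')) i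
        = M.mulVec x' i := by rw [WithLp.equiv_symm_apply]; simp [Matrix.toLin'_apply]
    have h2 : ((WithLp.equiv 2 (Fin d → ℂ)).symm
        ((Matrix.toLin' (M.map (algebraMap ℝ ℂ))) (fun i => (x' i : ℂ)))) i
        = (M.map (algebraMap ℝ ℂ)).mulVec (fun i => (x' i : ℂ)) i := by
      rw [WithLp.equiv_symm_apply]; simp [Matrix.toLin'_apply]
    rw [h1, h2]
    have h3 : (M.map (algebraMap ℝ ℂ)).mulVec (fun i => (x' i : ℂ)) i
        = ((M.mulVec x' i : ℝ) : ℂ) := by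
      simp only [Matrix.mulVec, dotProduct, Matrix.map_apply]
      push_cast
      rfl

    rw [h3, Complex.norm_real]
  rw [happly, ← hnorm_xy]
  exact (Matrix.toEuclideanCLM (𝕜 := ℂ) (M.map (algebraMap ℝ ℂ))).le_opNorm y
end real_complex


section helpers
variable {d : ℕ}

lemma Qsplit (γ : ℕ → ℝ) (A : Matrix (Fin d) (Fin d) ℝ) (k p q : ℕ) :
    ((List.range (p+q)).map (fun i => (1:Matrix (Fin d) (Fin d) ℝ) + γ (k+i) • A)).prod
    = ((List.range p).map (fun i => (1:Matrix (Fin d) (Fin d) ℝ) + γ (k+i) • A)).prod *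
      ((List.range q).map (fun i => (1:Matrix (Fin d) (Fin d) ℝ) + γ ((k+p)+i) • A)).prod := by
  rw [List.range_add, List.map_append, List.prod_append]
  congr 2
  rw [List.map_map]
  apply List.map_congr_left
  intro i _
  simp only [Function.comp_apply]
  have h : k + (p + i) = (k + p) + i := by omega
  rw [h]

lemma Qcomplex (γ : ℕ → ℝ) (A : Matrix (Fin d) (Fin d) ℝ) (k m : ℕ) :
    Matrix.toEuclideanCLM (𝕜 := ℂ)
      ((((List.range m).map (fun i => (1:Matrix (Fin d) (Fin d) ℝ) + γ (k+i) • A)).prod).map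
        (algebraMap ℝ ℂ))
    = ((List.range m).map (fun i =>
        (1 : EuclideanSpace ℂ (Fin d) →L[ℂ] EuclideanSpace ℂ (Fin d))
          + (γ (k+i):ℂ) • (Matrix.toEuclideanCLM (𝕜 := ℂ) (A.map (algebraMap ℝ ℂ))))).prod := by
  have h1 : (((List.range m).map (fun i => (1:Matrix (Fin d) (Fin d) ℝ) + γ (k+i) • A)).prod).map
      (algebraMap ℝ ℂ)
      = ((List.range m).map (fun i =>
          (1:Matrix (Fin d) (Fin d) ℂ) + (γ (k+i):ℂ) • A.map (algebraMap ℝ ℂ))).prod := by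
    have h2 := map_list_prod ((algebraMap ℝ ℂ).mapMatrix)
      ((List.range m).map (fun i => (1:Matrix (Fin d) (Fin d) ℝ) + γ (k+i) • A))
    have h3 : ((algebraMap ℝ ℂ).mapMatrix) (((List.range m).map
        (fun i => (1:Matrix (Fin d) (Fin d) ℝ) + γ (k+i) • A)).prod)
        = (((List.range m).map (fun i => (1:Matrix (Fin d) (Fin d) ℝ) + γ (k+i) • A)).prod).map
          (algebraMap ℝ ℂ) := rfl
    rw [h3] at h2
    rw [h2, List.map_map]
    apply congrArg List.prod
    apply List.map_congr_left
    intro i _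
    simp only [Function.comp_apply]
    ext a b
    simp [Matrix.map_apply, Matrix.one_apply, Matrix.add_apply, Matrix.smul_apply]
    split <;> simp
  rw [h1, map_list_prod, List.map_map]
  apply congrArg List.prod
  apply List.map_congr_left
  intro i _
  simp only [Function.comp_apply, map_add, map_smul, map_one]

noncomputable def clmToEndAlgHom {𝕜 E : Type*} [NontriviallyNormedField 𝕜] [NormedAddCommGroup E]
    [NormedSpace 𝕜 E] : (E →L[𝕜] E) →ₐ[𝕜] (E →ₗ[𝕜] E) where
  toFun := ContinuousLinearMap.toLinearMap
  map_one' := rfl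
  map_mul' := fun _ _ => rfl
  map_zero' := rfl
  map_add' := fun _ _ => rfl
  commutes' := fun c => by
    ext x
    simp [Module.algebraMap_end_apply, Algebra.algebraMap_eq_smul_one]

end helpers

open scoped Matrix

/-- If all eigenvalues of `A` (over `ℂ`) have real part `≤ -r < 0`, and `γ_n` is a positive
sequence tending to `0`, then for any `0 < r' < r` there is `C > 0` such that for all `k < n`,
`‖∏_{j=k}^{n} (I + γ_j A)‖ ≤ C e^{−r' ∑_{j=k}^{n} γ_j}`, where the product is taken in order
(as a list product over `j = k, …, n`) and `‖·‖` is the operator norm on Euclidean space. -/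
theorem prod_one_add_smul_hurwitz_bound {d : ℕ} (A : Matrix (Fin d) (Fin d) ℝ) (r : ℝ)
    (hr : 0 < r) (hA : ∀ μ ∈ spectrum ℂ (A.map (algebraMap ℝ ℂ)), μ.re ≤ -r)
    (γ : ℕ → ℝ) (hγpos : ∀ n, 0 < γ n)
    (hγ0 : Filter.Tendsto γ Filter.atTop (nhds 0))
    (r' : ℝ) (hr'0 : 0 < r') (hr' : r' < r) :
    ∃ C > 0, ∀ k n : ℕ, k < n →
      ‖Matrix.toEuclideanCLM (𝕜 := ℝ)
          (((List.range (n - k + 1)).map (fun i => (1 : Matrix (Fin d) (Fin d) ℝ)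
            + γ (k + i) • A)).prod)‖ ≤
        C * Real.exp (-r' * ∑ j ∈ Finset.Icc k n, γ j) := by
  classical
  set V := EuclideanSpace ℂ (Fin d)
  set B : Matrix (Fin d) (Fin d) ℂ := A.map (algebraMap ℝ ℂ) with hBdef
  set f : V →L[ℂ] V := Matrix.toEuclideanCLM (𝕜 := ℂ) B with hfdef
  set fl : Module.End ℂ V := clmToEndAlgHom f with hfldef
  set Kf : ℝ := ‖f‖ with hKfdef
  have hKf0 : 0 ≤ Kf := norm_nonneg f
  set ε : ℝ := (r - r')/2 with hεdef
  have hε : 0 < ε := by rw [hεdef]; linarith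
  set γ₀ : ℝ := (r - r') / (Kf^2 + 1) with hγ₀def
  have hγ₀pos : 0 < γ₀ := by rw [hγ₀def]; apply div_pos (by linarith) (add_pos_of_nonneg_of_pos (sq_nonneg Kf) one_pos)
  obtain ⟨K₀, hK₀⟩ : ∃ K₀, ∀ j, K₀ ≤ j → γ j < γ₀ :=
    Filter.eventually_atTop.mp (hγ0.eventually (gt_mem_nhds hγ₀pos))
  -- eigenspace decomposition
  have hInternal : DirectSum.IsInternal (fun μ : ℂ => fl.maxGenEigenspace μ) :=
    DirectSum.isInternal_submodule_of_iSupIndep_of_iSup_eq_top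
      (Module.End.independent_maxGenEigenspace fl)
      (Module.End.iSup_maxGenEigenspace_eq_top fl)
  let bW : (μ : ℂ) → Basis (Fin (Module.finrank ℂ (fl.maxGenEigenspace μ))) ℂ
      (fl.maxGenEigenspace μ) := fun μ => Module.finBasis ℂ _
  let b := hInternal.collectedBasis bW
  haveI : Fintype ((μ : ℂ) × Fin (Module.finrank ℂ (fl.maxGenEigenspace μ))) :=
    FiniteDimensional.fintypeBasisIndex b
  have hmem : ∀ i, b i ∈ fl.maxGenEigenspace i.1 := fun i =>
    hInternal.collectedBasis_mem bW i
  -- spectral facts for each index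
  have hspec : ∀ i : (μ : ℂ) × Fin (Module.finrank ℂ (fl.maxGenEigenspace μ)), (i.1 : ℂ).re ≤ -r ∧ ‖(i.1 : ℂ)‖ ≤ Kf := by
    intro i
    have hWne : fl.maxGenEigenspace i.1 ≠ ⊥ := by
      intro hW
      have := hmem i
      rw [hW, Submodule.mem_bot] at this
      exact b.ne_zero i this
    have hgen : fl.genEigenspace i.1 (Module.finrank ℂ V) ≠ ⊥ := by
      rw [← Module.End.maxGenEigenspace_eq_genEigenspace_finrank]; exact hWne
    have hE : fl.HasEigenvalue i.1 :=
      Module.End.hasEigenvalue_of_hasGenEigenvalue (k := Module.finrank ℂ V) hgen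
    obtain ⟨v, hv⟩ := hE.exists_hasEigenvector
    constructor
    · -- in spectrum of B
      have h1 : i.1 ∈ spectrum ℂ fl := Module.End.hasEigenvalue_iff_mem_spectrum.mp hE
      have h2 : i.1 ∈ spectrum ℂ f := AlgHom.spectrum_apply_subset clmToEndAlgHom f h1
      have h3 : spectrum ℂ f = spectrum ℂ B := AlgEquiv.spectrum_eq (Matrix.toEuclideanCLM (𝕜 := ℂ)) B
      exact hA i.1 (h3 ▸ h2)
    · -- norm bound via eigenvector
      have hveq : f v = i.1 • v := hv.apply_eq_smul
      have hvne : v ≠ 0 := hv.right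
      have h1 : ‖i.1‖ * ‖v‖ = ‖f v‖ := by rw [hveq, norm_smul]
      have h2 : ‖f v‖ ≤ Kf * ‖v‖ := f.le_opNorm v
      have hvpos : 0 < ‖v‖ := norm_pos_iff.mpr hvne
      nlinarith
  -- nilpotency
  have hnil : ∀ i : (μ : ℂ) × Fin (Module.finrank ℂ (fl.maxGenEigenspace μ)), ((f - algebraMap ℂ (V →L[ℂ] V) i.1)^d) (b i) = 0 := by
    intro i
    have hx := hmem i
    rw [Module.End.maxGenEigenspace_eq_genEigenspace_finrank] at hx
    have hd : Module.finrank ℂ V = d := finrank_euclideanSpace_fin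
    rw [hd, Module.End.genEigenspace_nat] at hx
    have hx0 : ((fl - i.1 • 1)^d) (b i) = 0 := LinearMap.mem_ker.mp hx
    have hcoe : clmToEndAlgHom ((f - algebraMap ℂ (V →L[ℂ] V) i.1)^d) = (fl - i.1 • 1)^d := by
      rw [map_pow, map_sub, AlgHom.commutes, Algebra.algebraMap_eq_smul_one]
    calc ((f - algebraMap ℂ (V →L[ℂ] V) i.1)^d) (b i)
        = (clmToEndAlgHom ((f - algebraMap ℂ (V →L[ℂ] V) i.1)^d)) (b i) := rfl
      _ = ((fl - i.1 • 1)^d) (b i) := by rw [hcoe]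
      _ = 0 := hx0
  -- constants
  set K : ℝ := 2*Kf + 1 with hKdef
  have hKg : ∀ i : (μ : ℂ) × Fin (Module.finrank ℂ (fl.maxGenEigenspace μ)), ‖f - algebraMap ℂ (V →L[ℂ] V) i.1‖ ≤ K := by
    intro i
    have h1 : ‖algebraMap ℂ (V →L[ℂ] V) i.1‖ ≤ ‖i.1‖ := by
      rw [Algebra.algebraMap_eq_smul_one, norm_smul]
      calc ‖i.1‖ * ‖(1 : V →L[ℂ] V)‖ ≤ ‖i.1‖ * 1 := by
            apply mul_le_mul_of_nonneg_left ContinuousLinearMap.norm_id_le (norm_nonneg _)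
        _ = ‖i.1‖ := mul_one _
    calc ‖f - algebraMap ℂ (V →L[ℂ] V) i.1‖ ≤ ‖f‖ + ‖algebraMap ℂ (V →L[ℂ] V) i.1‖ :=
          norm_sub_le _ _
      _ ≤ Kf + ‖i.1‖ := by exact add_le_add le_rfl h1
      _ ≤ Kf + Kf := add_le_add le_rfl (hspec i).2
      _ ≤ K := by rw [hKdef]; linarith
  have hK0 : 0 ≤ K := by rw [hKdef]; linarith
  -- scalar bound
  have hscalar : ∀ μ : ℂ, μ.re ≤ -r → ‖μ‖ ≤ Kf → ∀ j, K₀ ≤ j →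
      ‖(1 : ℂ) + (γ j : ℂ) * μ‖ ≤ Real.exp (-(r' + ε) * γ j) := by
    intro μ hre hKμ j hj
    have hγj : 0 < γ j := hγpos j
    have hγj0 : γ j ≤ γ₀ := (hK₀ j hj).le
    have hμsq : μ.re^2 + μ.im^2 ≤ Kf^2 := by
      have h1 : ‖μ‖^2 = μ.re^2 + μ.im^2 := by
        rw [Complex.sq_norm, Complex.normSq_apply]; ring
      have h2 : ‖μ‖^2 ≤ Kf^2 := by
        apply pow_le_pow_left₀ (norm_nonneg μ) hKμ
      linarith
    have hsq : ‖(1:ℂ) + (γ j : ℂ) * μ‖^2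
        = 1 + 2*(γ j)*μ.re + (γ j)^2 * (μ.re^2 + μ.im^2) := by
      rw [Complex.sq_norm, Complex.normSq_apply]
      simp [Complex.add_re, Complex.add_im, Complex.mul_re, Complex.mul_im,
        Complex.ofReal_re, Complex.ofReal_im]
      ring
    have hρr : r' + ε < r := by rw [hεdef]; linarith
    have hstep : ‖(1:ℂ) + (γ j : ℂ) * μ‖^2 ≤ 1 - 2*(r'+ε)*(γ j) := by
      rw [hsq]
      have h1 : 2*(γ j)*μ.re ≤ 2*(γ j)*(-r) := by
        apply mul_le_mul_of_nonneg_left hre (by linarith)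
      have h2 : (γ j)^2 * (μ.re^2 + μ.im^2) ≤ (γ j)^2 * Kf^2 := by
        apply mul_le_mul_of_nonneg_left hμsq (by positivity)
      have h3 : (γ j) * Kf^2 ≤ r - r' := by
        have := mul_le_mul_of_nonneg_right hγj0 (by positivity : (0:ℝ) ≤ Kf^2 + 1)
        rw [hγ₀def, div_mul_cancel₀] at this
        · nlinarith
        · have := add_pos_of_nonneg_of_pos (sq_nonneg Kf) (one_pos (α := ℝ))
          linarith
      have h4 : (γ j)^2 * Kf^2 = (γ j) * ((γ j) * Kf^2) := by ring
      have h5 : (γ j) * ((γ j) * Kf^2) ≤ (γ j) * (r - r') := by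
        apply mul_le_mul_of_nonneg_left h3 hγj.le
      have heeγ : 2*(r'+ε)*(γ j) = (r+r')*(γ j) := by rw [hεdef]; ring
      linarith
    have hexp2 : 1 - 2*(r'+ε)*(γ j) ≤ Real.exp (-(r'+ε) * γ j)^2 := by
      have h1 : Real.exp (-(r'+ε) * γ j)^2 = Real.exp (2*(-(r'+ε) * γ j)) := by
        rw [sq, ← Real.exp_add]; ring_nf
      rw [h1]
      have := Real.add_one_le_exp (2*(-(r'+ε) * γ j))
      linarith
    have hz : ‖(1:ℂ) + (γ j : ℂ) * μ‖ = Real.sqrt (‖(1:ℂ) + (γ j : ℂ) * μ‖^2) :=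
      (Real.sqrt_sq (norm_nonneg _)).symm
    have hw : Real.exp (-(r'+ε) * γ j) = Real.sqrt (Real.exp (-(r'+ε) * γ j)^2) :=
      (Real.sqrt_sq (Real.exp_pos _).le).symm
    rw [hz, hw]
    exact Real.sqrt_le_sqrt (by linarith)
  -- constants for blocks
  set Cb : ℝ := ∑ s ∈ Finset.range d,
      ((s.factorial : ℝ) / ε^s) * Real.exp ((r'+ε)*γ₀*s) * K^s with hCbdef
  have hCb0 : 0 ≤ Cb := by
    rw [hCbdef]
    apply Finset.sum_nonneg
    intro s _
    apply mul_nonneg (mul_nonneg (div_nonneg (Nat.cast_nonneg _) (pow_nonneg hε.le _))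
      (Real.exp_pos _).le) (pow_nonneg hK0 _)
  set CB : ℝ := ∑ i, ‖LinearMap.toContinuousLinearMap (b.coord i)‖ * ‖b i‖ with hCBdef
  have hCB0 : 0 ≤ CB := by
    rw [hCBdef]
    apply Finset.sum_nonneg
    intro i _
    exact mul_nonneg (norm_nonneg _) (norm_nonneg _)
  set C₁ : ℝ := CB * Cb with hC₁def
  have hC₁0 : 0 ≤ C₁ := mul_nonneg hCB0 hCb0
  -- complex bound for k ≥ K₀
  have hcomplex : ∀ k m : ℕ, K₀ ≤ k →
      ‖((List.range m).map (fun i => (1 : V →L[ℂ] V) + (γ (k+i):ℂ) • f)).prod‖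
        ≤ C₁ * Real.exp (-r' * ∑ i ∈ Finset.range m, γ (k+i)) := by
    intro k m hk
    apply ContinuousLinearMap.opNorm_le_bound _ (mul_nonneg hC₁0 (Real.exp_pos _).le)
    intro x
    set Q : V →L[ℂ] V := ((List.range m).map (fun i => (1 : V →L[ℂ] V) + (γ (k+i):ℂ) • f)).prod
      with hQdef
    have hdec : Q x = ∑ i, b.repr x i • Q (b i) := by
      conv_lhs => rw [← b.sum_repr x]
      rw [map_sum]
      simp_rw [map_smul]
    have hQb : ∀ i : (μ : ℂ) × Fin (Module.finrank ℂ (fl.maxGenEigenspace μ)), ‖Q (b i)‖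
        ≤ Cb * Real.exp (-r' * ∑ i ∈ Finset.range m, γ (k+i)) * ‖b i‖ := by
      intro i
      have hfac : Q = ((List.range m).map (fun i2 =>
          algebraMap ℂ (V →L[ℂ] V) (1 + (γ (k+i2):ℂ) * i.1)
            + (γ (k+i2):ℂ) • (f - algebraMap ℂ (V →L[ℂ] V) i.1))).prod := by
        rw [hQdef]
        apply congrArg List.prod
        apply List.map_congr_left
        intro i2 _
        simp only [Algebra.algebraMap_eq_smul_one, smul_sub, smul_smul, add_smul, one_smul]
        abel
      rw [hfac]
      have hb := apply_bound (f - algebraMap ℂ (V →L[ℂ] V) i.1) γ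
        (fun j => 1 + (γ j : ℂ) * i.1) r' ε γ₀ K hε hr'0.le (hKg i)
        (fun j => (hγpos j).le) k
        (fun j hj => (hK₀ j (le_trans hk hj)).le)
        (fun j hj => hscalar i.1 (hspec i).1 (hspec i).2 j (le_trans hk hj))
        m d (b i) (hnil i)
      calc ‖(((List.range m).map (fun i2 =>
          algebraMap ℂ (V →L[ℂ] V) (1 + (γ (k+i2):ℂ) * i.1)
            + (γ (k+i2):ℂ) • (f - algebraMap ℂ (V →L[ℂ] V) i.1))).prod) (b i)‖
          ≤ (∑ s ∈ Finset.range d, ((s.factorial : ℝ) / ε^s) * Real.exp ((r'+ε)*γ₀*s) * K^s)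
            * Real.exp (-r' * ∑ i2 ∈ Finset.range m, γ (k+i2)) * ‖b i‖ := hb
        _ = Cb * Real.exp (-r' * ∑ i2 ∈ Finset.range m, γ (k+i2)) * ‖b i‖ := by rw [hCbdef]
    have hcoord : ∀ i : (μ : ℂ) × Fin (Module.finrank ℂ (fl.maxGenEigenspace μ)), ‖b.repr x i‖ ≤ ‖LinearMap.toContinuousLinearMap (b.coord i)‖ * ‖x‖ := by
      intro i
      have h1 : b.repr x i = (LinearMap.toContinuousLinearMap (b.coord i)) x := by
        simp [Basis.coord_apply]
      rw [h1]
      exact (LinearMap.toContinuousLinearMap (b.coord i)).le_opNorm x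
    rw [hdec]
    set e : ℝ := Real.exp (-r' * ∑ i ∈ Finset.range m, γ (k+i)) with hedef
    have he0 : 0 < e := Real.exp_pos _
    calc ‖∑ i, b.repr x i • Q (b i)‖
        ≤ ∑ i, ‖b.repr x i • Q (b i)‖ := norm_sum_le _ _
      _ = ∑ i, ‖b.repr x i‖ * ‖Q (b i)‖ := by
          apply Finset.sum_congr rfl; intro i _; rw [norm_smul]
      _ ≤ ∑ i, (‖LinearMap.toContinuousLinearMap (b.coord i)‖ * ‖x‖) * (Cb * e * ‖b i‖) := by
          apply Finset.sum_le_sum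
          intro i _
          apply mul_le_mul (hcoord i) (hQb i) (norm_nonneg _) (mul_nonneg (norm_nonneg _) (norm_nonneg _))
      _ = (∑ i, ‖LinearMap.toContinuousLinearMap (b.coord i)‖ * ‖b i‖) * Cb * e * ‖x‖ := by
          simp only [Finset.sum_mul]
          apply Finset.sum_congr rfl
          intro i _
          ring
      _ = C₁ * e * ‖x‖ := by rw [hC₁def, hCBdef]
  -- real bound for k ≥ K₀
  have hreal : ∀ k m : ℕ, K₀ ≤ k →
      ‖Matrix.toEuclideanCLM (𝕜 := ℝ)
        (((List.range m).map (fun i => (1 : Matrix (Fin d) (Fin d) ℝ) + γ (k+i) • A)).prod)‖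
        ≤ C₁ * Real.exp (-r' * ∑ i ∈ Finset.range m, γ (k+i)) := by
    intro k m hk
    calc (‖Matrix.toEuclideanCLM (𝕜 := ℝ)
        (((List.range m).map (fun i => (1 : Matrix (Fin d) (Fin d) ℝ) + γ (k+i) • A)).prod)‖)
        ≤ ‖Matrix.toEuclideanCLM (𝕜 := ℂ)
          ((((List.range m).map (fun i => (1 : Matrix (Fin d) (Fin d) ℝ) + γ (k+i) • A)).prod).map
            (algebraMap ℝ ℂ))‖ := real_clm_norm_le _
      _ = ‖((List.range m).map (fun i => (1 : V →L[ℂ] V) + (γ (k+i):ℂ) • f)).prod‖ := by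
          rw [Qcomplex]
      _ ≤ C₁ * Real.exp (-r' * ∑ i ∈ Finset.range m, γ (k+i)) := hcomplex k m hk
  -- global constants
  set G : ℝ := ∑ j ∈ Finset.range K₀, γ j with hGdef
  have hG0 : 0 ≤ G := Finset.sum_nonneg fun j _ => (hγpos j).le
  set B₀ : ℝ := 1 + ∑ k ∈ Finset.range K₀, ‖Matrix.toEuclideanCLM (𝕜 := ℝ)
      (((List.range (K₀ - k)).map (fun i => (1 : Matrix (Fin d) (Fin d) ℝ) + γ (k+i) • A)).prod)‖
      with hB₀def
  have hB₀1 : 1 ≤ B₀ := by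
    rw [hB₀def]
    have : (0:ℝ) ≤ ∑ k ∈ Finset.range K₀, ‖Matrix.toEuclideanCLM (𝕜 := ℝ)
        (((List.range (K₀ - k)).map (fun i => (1 : Matrix (Fin d) (Fin d) ℝ) + γ (k+i) • A)).prod)‖ :=
      Finset.sum_nonneg fun k _ => norm_nonneg _
    linarith
  set B₁ : ℝ := 1 + ∑ p ∈ Finset.range K₀, ∑ q ∈ Finset.range K₀,
      ‖Matrix.toEuclideanCLM (𝕜 := ℝ)
      (((List.range (q - p + 1)).map (fun i => (1 : Matrix (Fin d) (Fin d) ℝ) + γ (p+i) • A)).prod)‖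
      with hB₁def
  have hB₁1 : 1 ≤ B₁ := by
    rw [hB₁def]
    have : (0:ℝ) ≤ ∑ p ∈ Finset.range K₀, ∑ q ∈ Finset.range K₀,
        ‖Matrix.toEuclideanCLM (𝕜 := ℝ)
        (((List.range (q - p + 1)).map (fun i => (1 : Matrix (Fin d) (Fin d) ℝ) + γ (p+i) • A)).prod)‖ :=
      Finset.sum_nonneg fun p _ => Finset.sum_nonneg fun q _ => norm_nonneg _
    linarith
  have hB₀0 : (0:ℝ) ≤ B₀ := by linarith
  have hB₁0 : (0:ℝ) ≤ B₁ := by linarith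
  set C : ℝ := (1 + C₁) * B₀ * B₁ * Real.exp (r' * G) with hCdef
  have hexpG1 : 1 ≤ Real.exp (r' * G) := Real.one_le_exp (mul_nonneg hr'0.le hG0)
  have hCpos : 0 < C := by
    rw [hCdef]
    have h1 : (0:ℝ) < 1 + C₁ := by linarith
    exact mul_pos (mul_pos (mul_pos h1 (by linarith)) (by linarith)) (Real.exp_pos _)
  refine ⟨C, hCpos, ?_⟩
  intro k n hkn
  have hkn' : k ≤ n := hkn.le
  have hSrange : ∑ j ∈ Finset.Icc k n, γ j = ∑ i ∈ Finset.range (n-k+1), γ (k+i) :=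
    sum_Icc_eq_range γ k n hkn'
  by_cases hcase : K₀ ≤ k
  · calc (‖Matrix.toEuclideanCLM (𝕜 := ℝ)
        (((List.range (n-k+1)).map (fun i => (1 : Matrix (Fin d) (Fin d) ℝ) + γ (k+i) • A)).prod)‖)
        ≤ C₁ * Real.exp (-r' * ∑ i ∈ Finset.range (n-k+1), γ (k+i)) := hreal k (n-k+1) hcase
      _ = C₁ * Real.exp (-r' * ∑ j ∈ Finset.Icc k n, γ j) := by rw [hSrange]
      _ ≤ C * Real.exp (-r' * ∑ j ∈ Finset.Icc k n, γ j) := by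
          apply mul_le_mul_of_nonneg_right _ (Real.exp_pos _).le
          rw [hCdef]
          have h1 : 1 + C₁ ≤ (1+C₁)*B₀ := le_mul_of_one_le_right (by linarith) hB₀1
          have h2 : (1+C₁)*B₀ ≤ ((1+C₁)*B₀)*B₁ :=
            le_mul_of_one_le_right (mul_nonneg (by linarith) hB₀0) hB₁1
          have h3 : ((1+C₁)*B₀)*B₁ ≤ (((1+C₁)*B₀)*B₁)*Real.exp (r' * G) :=
            le_mul_of_one_le_right (mul_nonneg (mul_nonneg (by linarith) hB₀0) hB₁0) hexpG1
          nlinarith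
  · push_neg at hcase
    by_cases hn : n < K₀
    · -- both small
      have hterm : ‖Matrix.toEuclideanCLM (𝕜 := ℝ)
          (((List.range (n-k+1)).map (fun i => (1 : Matrix (Fin d) (Fin d) ℝ) + γ (k+i) • A)).prod)‖
          ≤ B₁ := by
        rw [hB₁def]
        have h1 : ‖Matrix.toEuclideanCLM (𝕜 := ℝ)
            (((List.range (n-k+1)).map (fun i => (1 : Matrix (Fin d) (Fin d) ℝ) + γ (k+i) • A)).prod)‖
            ≤ ∑ q ∈ Finset.range K₀, ‖Matrix.toEuclideanCLM (𝕜 := ℝ)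
              (((List.range (q - k + 1)).map (fun i => (1 : Matrix (Fin d) (Fin d) ℝ) + γ (k+i) • A)).prod)‖ := by
          apply Finset.single_le_sum (f := fun q => ‖Matrix.toEuclideanCLM (𝕜 := ℝ)
              (((List.range (q - k + 1)).map (fun i => (1 : Matrix (Fin d) (Fin d) ℝ) + γ (k+i) • A)).prod)‖)
            (fun q _ => norm_nonneg _) (Finset.mem_range.mpr hn)
        have h2 : ∑ q ∈ Finset.range K₀, ‖Matrix.toEuclideanCLM (𝕜 := ℝ)
              (((List.range (q - k + 1)).map (fun i => (1 : Matrix (Fin d) (Fin d) ℝ) + γ (k+i) • A)).prod)‖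
            ≤ ∑ p ∈ Finset.range K₀, ∑ q ∈ Finset.range K₀, ‖Matrix.toEuclideanCLM (𝕜 := ℝ)
              (((List.range (q - p + 1)).map (fun i => (1 : Matrix (Fin d) (Fin d) ℝ) + γ (p+i) • A)).prod)‖ := by
          apply Finset.single_le_sum (f := fun p => ∑ q ∈ Finset.range K₀,
            ‖Matrix.toEuclideanCLM (𝕜 := ℝ)
              (((List.range (q - p + 1)).map (fun i => (1 : Matrix (Fin d) (Fin d) ℝ) + γ (p+i) • A)).prod)‖)
            (fun p _ => Finset.sum_nonneg fun q _ => norm_nonneg _) (Finset.mem_range.mpr hcase)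
        linarith
      have hSG : ∑ j ∈ Finset.Icc k n, γ j ≤ G := by
        rw [hGdef]
        apply Finset.sum_le_sum_of_subset_of_nonneg
        · intro j hj
          rw [Finset.mem_Icc] at hj
          rw [Finset.mem_range]
          omega
        · intro j _ _
          exact (hγpos j).le
      have hone : 1 ≤ Real.exp (r' * G) * Real.exp (-r' * ∑ j ∈ Finset.Icc k n, γ j) := by
        rw [← Real.exp_add]
        apply Real.one_le_exp
        nlinarith
      calc (‖Matrix.toEuclideanCLM (𝕜 := ℝ)
          (((List.range (n-k+1)).map (fun i => (1 : Matrix (Fin d) (Fin d) ℝ) + γ (k+i) • A)).prod)‖)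
          ≤ B₁ := hterm
        _ ≤ B₁ * (Real.exp (r' * G) * Real.exp (-r' * ∑ j ∈ Finset.Icc k n, γ j)) :=
            le_mul_of_one_le_right (by linarith) hone
        _ ≤ C * Real.exp (-r' * ∑ j ∈ Finset.Icc k n, γ j) := by
            rw [hCdef]
            have hone' : (1:ℝ) ≤ (1+C₁)*B₀ := by nlinarith
            have hfact : B₁ * Real.exp (r' * G) ≤ ((1 + C₁) * B₀ * B₁) * Real.exp (r' * G) := by
              apply mul_le_mul_of_nonneg_right _ (Real.exp_pos _).le
              calc B₁ ≤ ((1+C₁)*B₀)*B₁ := le_mul_of_one_le_left hB₁0 hone'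
                _ = (1+C₁)*B₀*B₁ := by ring
            calc B₁ * (Real.exp (r' * G) * Real.exp (-r' * ∑ j ∈ Finset.Icc k n, γ j))
                = (B₁ * Real.exp (r' * G)) * Real.exp (-r' * ∑ j ∈ Finset.Icc k n, γ j) := by ring
              _ ≤ (((1 + C₁) * B₀ * B₁) * Real.exp (r' * G))
                  * Real.exp (-r' * ∑ j ∈ Finset.Icc k n, γ j) :=
                mul_le_mul_of_nonneg_right hfact (Real.exp_pos _).le
              _ = (1 + C₁) * B₀ * B₁ * Real.exp (r' * G)
                  * Real.exp (-r' * ∑ j ∈ Finset.Icc k n, γ j) := by ring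
    · push_neg at hn
      -- split
      set p := K₀ - k with hpdef
      set q := n - K₀ + 1 with hqdef
      have hpq : p + q = n - k + 1 := by omega
      have hkp : k + p = K₀ := by omega
      have hsplit : ((List.range (n-k+1)).map
          (fun i => (1 : Matrix (Fin d) (Fin d) ℝ) + γ (k+i) • A)).prod
          = ((List.range p).map (fun i => (1 : Matrix (Fin d) (Fin d) ℝ) + γ (k+i) • A)).prod *
            ((List.range q).map (fun i => (1 : Matrix (Fin d) (Fin d) ℝ) + γ (K₀+i) • A)).prod := by
        rw [← hpq, Qsplit γ A k p q, hkp]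
      have hnorm : ‖Matrix.toEuclideanCLM (𝕜 := ℝ)
          (((List.range (n-k+1)).map (fun i => (1 : Matrix (Fin d) (Fin d) ℝ) + γ (k+i) • A)).prod)‖
          ≤ ‖Matrix.toEuclideanCLM (𝕜 := ℝ)
              (((List.range p).map (fun i => (1 : Matrix (Fin d) (Fin d) ℝ) + γ (k+i) • A)).prod)‖
            * ‖Matrix.toEuclideanCLM (𝕜 := ℝ)
              (((List.range q).map (fun i => (1 : Matrix (Fin d) (Fin d) ℝ) + γ (K₀+i) • A)).prod)‖ := by
        rw [hsplit, map_mul]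
        exact norm_mul_le _ _
      have hQ1 : ‖Matrix.toEuclideanCLM (𝕜 := ℝ)
          (((List.range p).map (fun i => (1 : Matrix (Fin d) (Fin d) ℝ) + γ (k+i) • A)).prod)‖
          ≤ B₀ := by
        rw [hB₀def, hpdef]
        have h1 : ‖Matrix.toEuclideanCLM (𝕜 := ℝ)
            (((List.range (K₀-k)).map (fun i => (1 : Matrix (Fin d) (Fin d) ℝ) + γ (k+i) • A)).prod)‖
            ≤ ∑ k2 ∈ Finset.range K₀, ‖Matrix.toEuclideanCLM (𝕜 := ℝ)
              (((List.range (K₀ - k2)).map (fun i => (1 : Matrix (Fin d) (Fin d) ℝ) + γ (k2+i) • A)).prod)‖ := by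
          apply Finset.single_le_sum (f := fun k2 => ‖Matrix.toEuclideanCLM (𝕜 := ℝ)
              (((List.range (K₀ - k2)).map (fun i => (1 : Matrix (Fin d) (Fin d) ℝ) + γ (k2+i) • A)).prod)‖)
            (fun k2 _ => norm_nonneg _) (Finset.mem_range.mpr hcase)
        linarith
      have hQ2 : ‖Matrix.toEuclideanCLM (𝕜 := ℝ)
          (((List.range q).map (fun i => (1 : Matrix (Fin d) (Fin d) ℝ) + γ (K₀+i) • A)).prod)‖
          ≤ C₁ * Real.exp (-r' * ∑ i ∈ Finset.range q, γ (K₀+i)) := hreal K₀ q le_rfl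
      -- sum split
      have hSsum : ∑ i ∈ Finset.range (n-k+1), γ (k+i)
          = ∑ i ∈ Finset.range p, γ (k+i) + ∑ i ∈ Finset.range q, γ (K₀+i) := by
        rw [← hpq, Finset.sum_range_add]
        congr 1
        apply Finset.sum_congr rfl
        intro i _
        congr 1
        omega
      have hS1G : ∑ i ∈ Finset.range p, γ (k+i) ≤ G := by
        have he : ∑ i ∈ Finset.range p, γ (k+i) = ∑ j ∈ Finset.Icc k (K₀-1), γ j := by
          have hpp : K₀-1-k+1 = p := by omega
          rw [sum_Icc_eq_range γ k (K₀-1) (by omega), hpp]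
        rw [he, hGdef]
        apply Finset.sum_le_sum_of_subset_of_nonneg
        · intro j hj
          rw [Finset.mem_Icc] at hj
          rw [Finset.mem_range]
          omega
        · intro j _ _
          exact (hγpos j).le
      have hexpsplit : Real.exp (-r' * ∑ i ∈ Finset.range q, γ (K₀+i))
          ≤ Real.exp (r' * G) * Real.exp (-r' * ∑ j ∈ Finset.Icc k n, γ j) := by
        rw [← Real.exp_add, Real.exp_le_exp, hSrange, hSsum]
        nlinarith
      calc (‖Matrix.toEuclideanCLM (𝕜 := ℝ)
          (((List.range (n-k+1)).map (fun i => (1 : Matrix (Fin d) (Fin d) ℝ) + γ (k+i) • A)).prod)‖)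
          ≤ ‖Matrix.toEuclideanCLM (𝕜 := ℝ)
              (((List.range p).map (fun i => (1 : Matrix (Fin d) (Fin d) ℝ) + γ (k+i) • A)).prod)‖
            * ‖Matrix.toEuclideanCLM (𝕜 := ℝ)
              (((List.range q).map (fun i => (1 : Matrix (Fin d) (Fin d) ℝ) + γ (K₀+i) • A)).prod)‖ := hnorm
        _ ≤ B₀ * (C₁ * Real.exp (-r' * ∑ i ∈ Finset.range q, γ (K₀+i))) := by
            apply mul_le_mul hQ1 hQ2 (norm_nonneg _) (by linarith)
        _ ≤ B₀ * (C₁ * (Real.exp (r' * G) * Real.exp (-r' * ∑ j ∈ Finset.Icc k n, γ j))) := by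
            apply mul_le_mul_of_nonneg_left _ (by linarith)
            apply mul_le_mul_of_nonneg_left hexpsplit hC₁0
        _ = (B₀ * C₁ * Real.exp (r' * G)) * Real.exp (-r' * ∑ j ∈ Finset.Icc k n, γ j) := by ring
        _ ≤ C * Real.exp (-r' * ∑ j ∈ Finset.Icc k n, γ j) := by
            apply mul_le_mul_of_nonneg_right _ (Real.exp_pos _).le
            rw [hCdef]
            have h1 : B₀ * C₁ ≤ (1+C₁)*B₀ := by nlinarith
            have h2 : (B₀ * C₁) * Real.exp (r' * G) ≤ ((1+C₁)*B₀) * Real.exp (r' * G) :=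
              mul_le_mul_of_nonneg_right h1 (Real.exp_pos _).le
            have h3 : ((1+C₁)*B₀) * Real.exp (r' * G)
                ≤ (((1+C₁)*B₀)*B₁) * Real.exp (r' * G) :=
              mul_le_mul_of_nonneg_right
                (le_mul_of_one_le_right (mul_nonneg (by linarith) hB₀0) hB₁1)
                (Real.exp_pos _).le
            nlinarith
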